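/- Let I be a monomial ideal of S = K[x_1,...,x_n], let x_j be a variable, let S' be the polynomial ring in the variables other than x_j, and set I₀ = I ∩ S' and I₁ = (I : x_j). Then sdepth_S(I) ≥ min{sdepth_{S'}(I₀), sdepth_S(I₁)} and sdepth_S(S/I) ≥ min{sdepth_{S'}(S'/I₀), sdepth_S(S/I₁)}. (These follow from the vector-space decompositions I = I₀ ⊕ x_j I₁ and S/I = (S'/I₀) ⊕ x_j (S/I₁).) -/

import Mathlib

open MvPolynomial

/-- The `k`-th symbolic power of the cover ideal of a graph `G`:
`J(G)^(k) = ⋂_{{x,y} ∈ E(G)} (x,y)^k`. -/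
noncomputable def coverIdealSymbPow (K : Type*) [Field K] {V : Type*}
    (G : SimpleGraph V) (k : ℕ) : Ideal (MvPolynomial V K) :=
  ⨅ e : {p : V × V // G.Adj p.1 p.2}, (Ideal.span {X e.val.1, X e.val.2}) ^ k

/-- The "Stanley set" of monomials `u·K[Z]`, recorded by exponent vectors:
all exponent vectors of the form `u + w` with `w` supported in `Z`. -/
def stanleyPiece {σ : Type*} (u : σ →₀ ℕ) (Z : Finset σ) : Set (σ →₀ ℕ) :=
  {v | u ≤ v ∧ ∀ i ∉ Z, v i = u i}

/-- A Stanley decomposition of a set of monomials (recorded by their exponent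
vectors): a partition into finitely many Stanley sets `u_i·K[Z_i]`. -/
structure StanleyDecomp {σ : Type*} (A : Set (σ →₀ ℕ)) where
  m : ℕ
  u : Fin m → (σ →₀ ℕ)
  Z : Fin m → Finset σ
  cover : A = ⋃ i, stanleyPiece (u i) (Z i)
  disj : ∀ i j, i ≠ j → Disjoint (stanleyPiece (u i) (Z i)) (stanleyPiece (u j) (Z j))

/-- Stanley depth of a set of monomials: the maximum over all Stanley
decompositions of the minimum `|Z_i|` (with value `⊤` on the empty set,
corresponding to the convention `sdepth 0 = ∞`). -/
noncomputable def sdepthSet {σ : Type*} (A : Set (σ →₀ ℕ)) : ℕ∞ :=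
  ⨆ D : StanleyDecomp A, ⨅ i, ((D.Z i).card : ℕ∞)

/-- The set of (exponent vectors of) monomials belonging to an ideal. -/
def monomialSet {σ K : Type*} [CommSemiring K] (I : Ideal (MvPolynomial σ K)) :
    Set (σ →₀ ℕ) :=
  {v | MvPolynomial.monomial v (1 : K) ∈ I}

/-- Stanley depth of a monomial ideal `I ⊆ S = K[x_1,…,x_n]`. -/
noncomputable def sdepthIdeal {σ K : Type*} [CommSemiring K]
    (I : Ideal (MvPolynomial σ K)) : ℕ∞ :=
  sdepthSet (monomialSet I)

/-- Stanley depth of the quotient `S/I` of the polynomial ring by a monomial ideal. -/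
noncomputable def sdepthQuot {σ K : Type*} [CommSemiring K]
    (I : Ideal (MvPolynomial σ K)) : ℕ∞ :=
  sdepthSet (monomialSet I)ᶜ

/-- Stanley regularity of a set of monomials: the minimum over all Stanley
decompositions of the maximum degree `deg u_i`. -/
noncomputable def sregSet {σ : Type*} (A : Set (σ →₀ ℕ)) : ℕ∞ :=
  ⨅ D : StanleyDecomp A, ⨆ i, ((D.u i).sum (fun _ e => e) : ℕ∞)

/-- An ideal of the polynomial ring is a monomial ideal if it is generated by monomials. -/
def Ideal.IsMonomialIdeal {σ K : Type*} [CommSemiring K]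
    (I : Ideal (MvPolynomial σ K)) : Prop :=
  ∃ A : Set (σ →₀ ℕ), I = Ideal.span ((fun v => MvPolynomial.monomial v (1 : K)) '' A)

/-- The inclusion `S' = K[x_i : i ≠ j] → S = K[x_1,…,x_n]` of the polynomial
ring obtained by deleting the variable `x_j`. -/
noncomputable def varDeletionHom (K : Type*) [Field K] {n : ℕ} (j : Fin n) :
    MvPolynomial {i : Fin n // i ≠ j} K →ₐ[K] MvPolynomial (Fin n) K :=
  MvPolynomial.rename Subtype.val

/-- `I ∩ S'`: the restriction of an ideal `I ⊆ S` to the polynomial subring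
`S'` obtained by deleting the variable `x_j`, realized as the preimage of `I`
under the inclusion `S' → S`. -/
noncomputable def restrictIdeal (K : Type*) [Field K] {n : ℕ} (j : Fin n)
    (I : Ideal (MvPolynomial (Fin n) K)) : Ideal (MvPolynomial {i : Fin n // i ≠ j} K) :=
  Ideal.comap (varDeletionHom K j) I

namespace SdepthAux

variable {n : ℕ} {j : Fin n}

def emb (j : Fin n) : {i : Fin n // i ≠ j} ↪ Fin n := ⟨Subtype.val, Subtype.val_injective⟩

lemma emb_apply_j (x : {i : Fin n // i ≠ j} →₀ ℕ) : (Finsupp.embDomain (emb j) x) j = 0 := by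
  refine Finsupp.embDomain_notin_range _ _ _ ?_
  rintro ⟨⟨i, hi⟩, h⟩; exact hi h

lemma emb_apply (x : {i : Fin n // i ≠ j} →₀ ℕ) (i : {i : Fin n // i ≠ j}) :
    (Finsupp.embDomain (emb j) x) i.val = x i :=
  Finsupp.embDomain_apply_self _ _ _

lemma emb_subtypeDomain (v : Fin n →₀ ℕ) (hv : v j = 0) :
    Finsupp.embDomain (emb j) (v.subtypeDomain (· ≠ j)) = v := by
  ext i
  by_cases h : i = j
  · subst h; rw [emb_apply_j, hv]
  · simpa using emb_apply (j := j) (v.subtypeDomain (· ≠ j)) ⟨i, h⟩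

lemma piece_emb (u : {i : Fin n // i ≠ j} →₀ ℕ) (Z : Finset {i : Fin n // i ≠ j}) :
    stanleyPiece (Finsupp.embDomain (emb j) u) (Z.map (emb j))
      = Finsupp.embDomain (emb j) '' stanleyPiece u Z := by
  ext v
  constructor
  · rintro ⟨hle, hfix⟩
    have hjZ : j ∉ Z.map (emb j) := by
      simp only [Finset.mem_map]
      rintro ⟨⟨i, hi⟩, -, h⟩; exact hi h
    have hvj : v j = 0 := by rw [hfix j hjZ, emb_apply_j]
    refine ⟨v.subtypeDomain (· ≠ j), ⟨?_, ?_⟩, emb_subtypeDomain v hvj⟩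
    · refine Finsupp.le_def.mpr fun i => ?_
      have := Finsupp.le_def.mp hle i.val
      rwa [emb_apply] at this
    · intro i hi
      have hi' : i.val ∉ Z.map (emb j) := by
        simp only [Finset.mem_map]
        rintro ⟨a, ha, hav⟩
        exact hi (by rwa [show a = i from Subtype.val_injective hav] at ha)
      have := hfix i.val hi'
      rw [emb_apply] at this
      simpa using this
  · rintro ⟨w, ⟨hle, hfix⟩, rfl⟩
    constructor
    · refine Finsupp.le_def.mpr fun i => ?_
      by_cases h : i = j
      · subst h; simp [emb_apply_j]
      · rw [show i = ((⟨i, h⟩ : {i : Fin n // i ≠ j}) : Fin n) from rfl, emb_apply, emb_apply]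
        exact Finsupp.le_def.mp hle ⟨i, h⟩
    · intro i hi
      by_cases h : i = j
      · subst h; rw [emb_apply_j, emb_apply_j]
      · rw [show i = ((⟨i, h⟩ : {i : Fin n // i ≠ j}) : Fin n) from rfl, emb_apply, emb_apply]
        refine hfix _ fun hmem => hi (Finset.mem_map_of_mem _ hmem)

lemma piece_shift (u : Fin n →₀ ℕ) (Z : Finset (Fin n)) :
    stanleyPiece (Finsupp.single j 1 + u) Z
      = (fun w => Finsupp.single j 1 + w) '' stanleyPiece u Z := by
  ext v
  constructor
  · rintro ⟨hle, hfix⟩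
    have h1le : Finsupp.single j 1 ≤ v :=
      le_trans (le_add_of_nonneg_right zero_le) hle
    refine ⟨v - Finsupp.single j 1, ⟨?_, ?_⟩, ?_⟩
    · refine Finsupp.le_def.mpr fun i => ?_
      have h1 := Finsupp.le_def.mp hle i
      simp only [Finsupp.add_apply] at h1
      rw [Finsupp.tsub_apply]
      omega
    · intro i hi
      have h1 := hfix i hi
      have h2 := Finsupp.le_def.mp h1le i
      rw [Finsupp.tsub_apply]
      simp only [Finsupp.add_apply] at h1
      omega
    · exact add_tsub_cancel_of_le h1le
  · rintro ⟨w, ⟨hle, hfix⟩, rfl⟩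
    constructor
    · refine Finsupp.le_def.mpr fun i => ?_
      simp only [Finsupp.add_apply]
      exact Nat.add_le_add_left (Finsupp.le_def.mp hle i) _
    · intro i hi
      simp only [Finsupp.add_apply, hfix i hi]

lemma disjLR (s : Set ({i : Fin n // i ≠ j} →₀ ℕ)) (t : Set (Fin n →₀ ℕ)) :
    Disjoint (Finsupp.embDomain (emb j) '' s) ((fun w => Finsupp.single j 1 + w) '' t) := by
  rw [Set.disjoint_left]
  rintro v ⟨w, -, rfl⟩ ⟨w', -, heq⟩
  have h2 := DFunLike.congr_fun heq j
  simp only [Finsupp.add_apply, Finsupp.single_eq_same, emb_apply_j] at h2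
  omega

lemma key (j : Fin n) (A : Set (Fin n →₀ ℕ)) (A₀ : Set ({i : Fin n // i ≠ j} →₀ ℕ))
    (A₁ : Set (Fin n →₀ ℕ))
    (h0 : ∀ v, Finsupp.embDomain (emb j) v ∈ A ↔ v ∈ A₀)
    (h1 : ∀ w, Finsupp.single j 1 + w ∈ A ↔ w ∈ A₁) :
    min (sdepthSet A₀) (sdepthSet A₁) ≤ sdepthSet A := by
  have hsplit : A = (Finsupp.embDomain (emb j)) '' A₀
      ∪ (fun w => Finsupp.single j 1 + w) '' A₁ := by
    ext v
    constructor
    · intro hv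
      by_cases hvj : v j = 0
      · exact Or.inl ⟨_, (h0 _).mp (by rwa [emb_subtypeDomain v hvj]), emb_subtypeDomain v hvj⟩
      · have h1le : Finsupp.single j 1 ≤ v := by rw [Finsupp.single_le_iff]; omega
        have heq : Finsupp.single j 1 + (v - Finsupp.single j 1) = v := add_tsub_cancel_of_le h1le
        exact Or.inr ⟨v - Finsupp.single j 1, (h1 _).mp (by rwa [heq]), heq⟩
    · rintro (⟨w, hw, rfl⟩ | ⟨w, hw, rfl⟩)
      · exact (h0 _).mpr hw
      · exact (h1 _).mpr hw
  have main : ∀ (D₀ : StanleyDecomp A₀) (D₁ : StanleyDecomp A₁),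
      min (⨅ i, ((D₀.Z i).card : ℕ∞)) (⨅ i, ((D₁.Z i).card : ℕ∞)) ≤ sdepthSet A := by
    intro D₀ D₁
    obtain ⟨U, hUl, hUr⟩ : ∃ U : Fin (D₀.m + D₁.m) → (Fin n →₀ ℕ),
        (∀ a, U (Fin.castAdd D₁.m a) = Finsupp.embDomain (emb j) (D₀.u a)) ∧
        (∀ b, U (Fin.natAdd D₀.m b) = Finsupp.single j 1 + D₁.u b) :=
      ⟨Fin.addCases _ _, fun a => Fin.addCases_left a, fun b => Fin.addCases_right b⟩
    obtain ⟨ZZ, hZl, hZr⟩ : ∃ ZZ : Fin (D₀.m + D₁.m) → Finset (Fin n),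
        (∀ a, ZZ (Fin.castAdd D₁.m a) = (D₀.Z a).map (emb j)) ∧
        (∀ b, ZZ (Fin.natAdd D₀.m b) = D₁.Z b) :=
      ⟨Fin.addCases _ _, fun a => Fin.addCases_left a, fun b => Fin.addCases_right b⟩
    have hL : ∀ a : Fin D₀.m, stanleyPiece (U (Fin.castAdd D₁.m a)) (ZZ (Fin.castAdd D₁.m a))
        = Finsupp.embDomain (emb j) '' stanleyPiece (D₀.u a) (D₀.Z a) := by
      intro a; rw [hUl, hZl]; exact piece_emb _ _
    have hR : ∀ b : Fin D₁.m, stanleyPiece (U (Fin.natAdd D₀.m b)) (ZZ (Fin.natAdd D₀.m b))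
        = (fun w => Finsupp.single j 1 + w) '' stanleyPiece (D₁.u b) (D₁.Z b) := by
      intro b; rw [hUr, hZr]; exact piece_shift _ _
    have e1 : (⋃ i, stanleyPiece (U i) (ZZ i))
        = (⋃ a, Finsupp.embDomain (emb j) '' stanleyPiece (D₀.u a) (D₀.Z a))
          ∪ ⋃ b, (fun w => Finsupp.single j 1 + w) '' stanleyPiece (D₁.u b) (D₁.Z b) :=
      calc (⋃ i, stanleyPiece (U i) (ZZ i))
          = ⋃ s : Fin D₀.m ⊕ Fin D₁.m,
              stanleyPiece (U (finSumFinEquiv s)) (ZZ (finSumFinEquiv s)) :=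
            (Function.Surjective.iUnion_comp finSumFinEquiv.surjective _).symm
        _ = (⋃ a, stanleyPiece (U (finSumFinEquiv (Sum.inl a))) (ZZ (finSumFinEquiv (Sum.inl a))))
            ∪ ⋃ b, stanleyPiece (U (finSumFinEquiv (Sum.inr b))) (ZZ (finSumFinEquiv (Sum.inr b))) :=
            Set.iUnion_sum
        _ = _ := by
            congr 1
            · exact Set.iUnion_congr fun a => by rw [finSumFinEquiv_apply_left]; exact hL a
            · exact Set.iUnion_congr fun b => by rw [finSumFinEquiv_apply_right]; exact hR b
    have i0 : Finsupp.embDomain (emb j) '' A₀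
        = ⋃ a, Finsupp.embDomain (emb j) '' stanleyPiece (D₀.u a) (D₀.Z a) :=
      (congrArg _ D₀.cover).trans Set.image_iUnion
    have i1 : (fun w => Finsupp.single j 1 + w) '' A₁
        = ⋃ b, (fun w => Finsupp.single j 1 + w) '' stanleyPiece (D₁.u b) (D₁.Z b) :=
      (congrArg _ D₁.cover).trans Set.image_iUnion
    have hcover : A = ⋃ i, stanleyPiece (U i) (ZZ i) := by
      rw [hsplit, i0, i1]; exact e1.symm
    have hdisj : ∀ i k, i ≠ k →
        Disjoint (stanleyPiece (U i) (ZZ i)) (stanleyPiece (U k) (ZZ k)) := by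
      intro i k hik
      induction i using Fin.addCases with
      | left a =>
        induction k using Fin.addCases with
        | left a' =>
          rw [hL, hL]
          refine (Set.disjoint_image_iff (Finsupp.embDomain_injective _)).mpr ?_
          exact D₀.disj a a' (fun h => hik (by rw [h]))
        | right b => rw [hL, hR]; exact disjLR _ _
      | right b =>
        induction k using Fin.addCases with
        | left a => rw [hR, hL]; exact (disjLR _ _).symm
        | right b' =>
          rw [hR, hR]
          refine (Set.disjoint_image_iff ?_).mpr (D₁.disj b b' (fun h => hik (by rw [h])))
          exact fun x y hxy => by simpa using hxy
    have hmin : min (⨅ i, ((D₀.Z i).card : ℕ∞)) (⨅ i, ((D₁.Z i).card : ℕ∞))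
        ≤ ⨅ i, ((ZZ i).card : ℕ∞) := by
      refine le_iInf fun i => ?_
      induction i using Fin.addCases with
      | left a =>
        rw [hZl, Finset.card_map]
        exact le_trans (min_le_left _ _) (iInf_le _ a)
      | right b =>
        rw [hZr]
        exact le_trans (min_le_right _ _) (iInf_le _ b)
    exact le_trans hmin (le_iSup (fun D : StanleyDecomp A => ⨅ i, ((D.Z i).card : ℕ∞))
      ⟨D₀.m + D₁.m, U, ZZ, hcover, hdisj⟩)
  calc min (sdepthSet A₀) (sdepthSet A₁)
      = ⨆ D₀ : StanleyDecomp A₀, ⨆ D₁ : StanleyDecomp A₁,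
          min (⨅ i, ((D₀.Z i).card : ℕ∞)) (⨅ i, ((D₁.Z i).card : ℕ∞)) := by
        show sdepthSet A₀ ⊓ sdepthSet A₁ = _
        rw [sdepthSet, sdepthSet, iSup_inf_eq]
        exact iSup_congr fun D₀ => inf_iSup_eq _ _
    _ ≤ sdepthSet A := iSup₂_le main

end SdepthAux


/-- Let `I` be a monomial ideal of `S = K[x_1,…,x_n]`, let
`S'` be the polynomial ring in the variables other than `x_j`, and set
`I₀ = I ∩ S'` and `I₁ = (I : x_j)`. Then
`sdepth_S(I) ≥ min{sdepth_{S'}(I₀), sdepth_S(I₁)}` and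
`sdepth_S(S/I) ≥ min{sdepth_{S'}(S'/I₀), sdepth_S(S/I₁)}`. -/
theorem sdepth_split_along_variable (K : Type*) [Field K] (n : ℕ) (j : Fin n)
    (I : Ideal (MvPolynomial (Fin n) K)) (hI : I.IsMonomialIdeal) :
    min (sdepthIdeal (restrictIdeal K j I))
        (sdepthIdeal (Submodule.colon I (Ideal.span {(X j : MvPolynomial (Fin n) K)}))) ≤
      sdepthIdeal I ∧
    min (sdepthQuot (restrictIdeal K j I))
        (sdepthQuot (Submodule.colon I (Ideal.span {(X j : MvPolynomial (Fin n) K)}))) ≤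
      sdepthQuot I := by

  classical
  have h0I : ∀ v : {i : Fin n // i ≠ j} →₀ ℕ,
      Finsupp.embDomain (SdepthAux.emb j) v ∈ monomialSet I
        ↔ v ∈ monomialSet (restrictIdeal K j I) := by
    intro v
    simp only [monomialSet, Set.mem_setOf_eq, restrictIdeal, Ideal.mem_comap, varDeletionHom]
    have he : Finsupp.embDomain (SdepthAux.emb j) v = Finsupp.mapDomain Subtype.val v :=
      Finsupp.embDomain_eq_mapDomain _ _
    rw [he, rename_monomial]
  have h1I : ∀ w, Finsupp.single j 1 + w ∈ monomialSet I ↔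
      w ∈ monomialSet (Submodule.colon I (Ideal.span {(X j : MvPolynomial (Fin n) K)})) := by
    intro w
    simp only [monomialSet, Set.mem_setOf_eq]
    rw [Ideal.mem_colon_span_singleton]
    have hx : (monomial w (1:K)) * (X j : MvPolynomial (Fin n) K)
        = monomial (Finsupp.single j 1 + w) 1 := by
      rw [show (X j : MvPolynomial (Fin n) K) = monomial (Finsupp.single j 1) 1 from rfl,
        monomial_mul, one_mul, add_comm]
    rw [hx]
  constructor
  · exact SdepthAux.key j (monomialSet I) _ _ h0I h1I
  · refine SdepthAux.key j (monomialSet I)ᶜ _ _ ?_ ?_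
    · intro v
      rw [Set.mem_compl_iff, Set.mem_compl_iff]
      exact not_iff_not.mpr (h0I v)
    · intro w
      rw [Set.mem_compl_iff, Set.mem_compl_iff]
      exact not_iff_not.mpr (h1I w)
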